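/- Let n ≥ 1 and let h₁, …, hₙ ∈ ℤ² be primitive vectors (each nonzero with gcd of coordinates equal to 1) such that h₁ + ⋯ + hₙ = 0. Suppose the vectors are ordered by angle: θ(h₁) ≤ θ(h₂) ≤ ⋯ ≤ θ(hₙ), where θ(v) ∈ [0, 2π) denotes the counterclockwise angle of the nonzero vector v measured from the positive x-axis. Define the partial sums v₀ = (0,0) and vᵢ = v_{i−1} + hᵢ for i = 1, …, n. Then every point vᵢ lies on the frontier (topological boundary) of the convex hull of {v₀, v₁, …, vₙ} in ℝ², i.e. the partial sums are the boundary lattice path of a convex lattice polygon. -/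

import Mathlib

open Real Finset in
lemma stmt8_sin_nonpos {x : ℝ} (h1 : π ≤ x) (h2 : x ≤ 2 * π) : Real.sin x ≤ 0 := by
  have h := Real.sin_nonneg_of_nonneg_of_le_pi (x := x - π) (by linarith) (by linarith)
  rw [Real.sin_sub_pi] at h
  linarith

open Real Finset in
lemma stmt8_key (n i : ℕ) (hi : i ≤ n) (φ : ℝ) (hφ0 : 0 ≤ φ) (hφ2 : φ < 2 * π)
    (g Θ r : ℕ → ℝ)
    (hg : ∀ j, j < n → g j = r j * Real.sin (φ - Θ j))
    (hr : ∀ j, j < n → 0 ≤ r j)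
    (hΘlb : ∀ j, j < n → 0 ≤ Θ j) (hΘub : ∀ j, j < n → Θ j < 2 * π)
    (hm : ∀ j k, j ≤ k → k < n → Θ j ≤ Θ k)
    (hlow : ∀ j, j < i → Θ j ≤ φ) (hhigh : ∀ j, i ≤ j → j < n → φ ≤ Θ j)
    (htot : ∑ j ∈ Finset.range n, g j = 0) :
    ∀ k, k ≤ n → ∑ j ∈ Finset.range k, g j ≤ ∑ j ∈ Finset.range i, g j := by
  have hpi : 0 < π := Real.pi_pos
  have hsplit : ∀ a b : ℕ, a ≤ b → b ≤ n →
      ∑ j ∈ Finset.range a, g j + ∑ j ∈ Finset.Ico a b, g j = ∑ j ∈ Finset.range b, g j := by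
    intro a b hab hbn
    rw [Finset.range_eq_Ico, Finset.range_eq_Ico]
    exact Finset.sum_Ico_consecutive g (Nat.zero_le _) hab
  have hA : 0 ≤ ∑ j ∈ Finset.range i, g j := by
    rcases le_or_gt φ π with hc | hc
    · apply Finset.sum_nonneg
      intro j hj
      have hj' : j < i := Finset.mem_range.mp hj
      have hjn : j < n := lt_of_lt_of_le hj' hi
      rw [hg j hjn]
      have h1 : 0 ≤ φ - Θ j := by linarith [hlow j hj']
      have h2 : φ - Θ j ≤ π := by linarith [hΘlb j hjn]
      exact mul_nonneg (hr j hjn) (Real.sin_nonneg_of_nonneg_of_le_pi h1 h2)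
    · have hIco : ∑ j ∈ Finset.Ico i n, g j ≤ 0 := by
        apply Finset.sum_nonpos
        intro j hj
        obtain ⟨hij, hjn⟩ := Finset.mem_Ico.mp hj
        rw [hg j hjn]
        have h1 : 0 ≤ Θ j - φ := by linarith [hhigh j hij hjn]
        have h2 : Θ j - φ ≤ π := by linarith [hΘub j hjn]
        have hs : Real.sin (φ - Θ j) ≤ 0 := by
          rw [show φ - Θ j = -(Θ j - φ) by ring, Real.sin_neg]
          linarith [Real.sin_nonneg_of_nonneg_of_le_pi h1 h2]
        exact mul_nonpos_of_nonneg_of_nonpos (hr j hjn) hs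
      have := hsplit i n hi (le_refl n)
      linarith
  have hneg : ∑ j ∈ Finset.Ico i n, g j = - ∑ j ∈ Finset.range i, g j := by
    have := hsplit i n hi (le_refl n)
    linarith
  intro k hk
  rcases le_or_gt k i with hki | hik
  · rcases eq_or_lt_of_le hki with rfl | hki'
    · exact le_refl _
    have hkn : k < n := lt_of_lt_of_le hki' hi
    rcases le_or_gt (φ - Θ k) π with hc | hc
    · have hnn : 0 ≤ ∑ j ∈ Finset.Ico k i, g j := by
        apply Finset.sum_nonneg
        intro j hj
        obtain ⟨hkj, hji⟩ := Finset.mem_Ico.mp hj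
        have hjn : j < n := lt_of_lt_of_le hji hi
        rw [hg j hjn]
        have h1 : 0 ≤ φ - Θ j := by linarith [hlow j hji]
        have h2 : φ - Θ j ≤ π := by linarith [hm k j hkj hjn]
        exact mul_nonneg (hr j hjn) (Real.sin_nonneg_of_nonneg_of_le_pi h1 h2)
      have hs := hsplit k i hki hi
      linarith
    · have hnp : ∑ j ∈ Finset.range k, g j ≤ 0 := by
        apply Finset.sum_nonpos
        intro j hj
        have hjk : j < k := Finset.mem_range.mp hj
        have hjn : j < n := lt_of_lt_of_le hjk (le_of_lt hkn)
        rw [hg j hjn]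
        have h1 : π ≤ φ - Θ j := by linarith [hm j k (le_of_lt hjk) hkn]
        have h2 : φ - Θ j ≤ 2 * π := by linarith [hΘlb j hjn]
        exact mul_nonpos_of_nonneg_of_nonpos (hr j hjn) (stmt8_sin_nonpos h1 h2)
      linarith
  · -- i < k
    have hk1n : k - 1 < n := by omega
    have hsik : ∑ j ∈ Finset.range i, g j + ∑ j ∈ Finset.Ico i k, g j
        = ∑ j ∈ Finset.range k, g j := hsplit i k (le_of_lt hik) hk
    rcases le_or_gt (Θ (k - 1)) (φ + π) with hc | hc
    · have hIik : ∑ j ∈ Finset.Ico i k, g j ≤ 0 := by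
        apply Finset.sum_nonpos
        intro j hj
        obtain ⟨hij, hjk⟩ := Finset.mem_Ico.mp hj
        have hjn : j < n := by omega
        rw [hg j hjn]
        have hjk1 : j ≤ k - 1 := by omega
        have h1 : 0 ≤ Θ j - φ := by linarith [hhigh j hij hjn]
        have h2 : Θ j - φ ≤ π := by linarith [hm j (k-1) hjk1 hk1n]
        have hs : Real.sin (φ - Θ j) ≤ 0 := by
          rw [show φ - Θ j = -(Θ j - φ) by ring, Real.sin_neg]
          linarith [Real.sin_nonneg_of_nonneg_of_le_pi h1 h2]
        exact mul_nonpos_of_nonneg_of_nonpos (hr j hjn) hs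
      linarith
    · have hIkn : 0 ≤ ∑ j ∈ Finset.Ico k n, g j := by
        apply Finset.sum_nonneg
        intro j hj
        obtain ⟨hkj, hjn⟩ := Finset.mem_Ico.mp hj
        rw [hg j hjn]
        have hk1j : k - 1 ≤ j := by omega
        have h1 : π ≤ Θ j - φ := by linarith [hm (k-1) j hk1j hjn]
        have h2 : Θ j - φ ≤ 2 * π := by linarith [hΘub j hjn]
        have hs : Real.sin (φ - Θ j) ≥ 0 := by
          rw [show φ - Θ j = -(Θ j - φ) by ring, Real.sin_neg]
          linarith [stmt8_sin_nonpos h1 h2]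
        exact mul_nonneg (hr j hjn) hs
      have hsplit2 : ∑ j ∈ Finset.Ico i k, g j + ∑ j ∈ Finset.Ico k n, g j
          = ∑ j ∈ Finset.Ico i n, g j := Finset.sum_Ico_consecutive _ (le_of_lt hik) hk
      linarith

open Real in
/-- Let `h 0, …, h (n-1) ∈ ℤ²` be primitive vectors summing to zero,
ordered by their counterclockwise angle `θ ∈ [0, 2π)` with the positive `x`-axis
(so `h i = ‖h i‖ • (cos (θ i), sin (θ i))` with `θ` monotone). Then every partial sum
`v i` (with `v 0 = 0` and `v (i+1) = v i + h i`) lies on the frontier of the convex hull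
of all the partial sums: the partial sums form the boundary of a convex lattice polygon. -/
theorem stmt_8 (n : ℕ) (hn : 1 ≤ n) (h : Fin n → Fin 2 → ℤ)
    (hprim : ∀ i, Int.gcd (h i 0) (h i 1) = 1)
    (hsum : ∑ i, h i = 0)
    (θ : Fin n → ℝ)
    (hθmem : ∀ i, θ i ∈ Set.Ico 0 (2 * π))
    (hθdir : ∀ i, (fun j => (h i j : ℝ)) =
      Real.sqrt ((h i 0 : ℝ) ^ 2 + (h i 1 : ℝ) ^ 2) • ![Real.cos (θ i), Real.sin (θ i)])
    (hmono : Monotone θ)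
    (v : Fin (n + 1) → Fin 2 → ℝ)
    (hv0 : v 0 = 0)
    (hvi : ∀ i : Fin n, v i.succ = v i.castSucc + fun j => (h i j : ℝ)) :
    ∀ i, v i ∈ frontier (convexHull ℝ (Set.range v)) := by
  intro i
  classical
  have hmn : (i : ℕ) ≤ n := Nat.lt_succ_iff.mp i.isLt
  set m := (i : ℕ) with hmdef
  set φ : ℝ := if hm0 : m = 0 then θ ⟨0, hn⟩ else θ ⟨m - 1, by omega⟩ with hφdef
  set Θ : ℕ → ℝ := fun j => if hj : j < n then θ ⟨j, hj⟩ else 0 with hΘdef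
  set r : ℕ → ℝ := fun j => if hj : j < n then
    Real.sqrt ((h ⟨j, hj⟩ 0 : ℝ) ^ 2 + (h ⟨j, hj⟩ 1 : ℝ) ^ 2) else 0 with hrdef
  set g : ℕ → ℝ := fun j => if hj : j < n then
    Real.sin φ * (h ⟨j, hj⟩ 0 : ℝ) - Real.cos φ * (h ⟨j, hj⟩ 1 : ℝ) else 0 with hgdef
  set f : (Fin 2 → ℝ) → ℝ := fun x => Real.sin φ * x 0 - Real.cos φ * x 1 with hfdef
  -- coordinates
  have hcoord : ∀ j : Fin n, (h j 0 : ℝ) =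
      Real.sqrt ((h j 0 : ℝ) ^ 2 + (h j 1 : ℝ) ^ 2) * Real.cos (θ j) ∧ (h j 1 : ℝ) =
      Real.sqrt ((h j 0 : ℝ) ^ 2 + (h j 1 : ℝ) ^ 2) * Real.sin (θ j) := by
    intro j
    constructor
    · have := congrFun (hθdir j) 0
      simpa [smul_eq_mul] using this
    · have := congrFun (hθdir j) 1
      simpa [smul_eq_mul] using this
  have hg' : ∀ j, j < n → g j = r j * Real.sin (φ - Θ j) := by
    intro j hj
    simp only [hgdef, hrdef, hΘdef, dif_pos hj]
    obtain ⟨e0, e1⟩ := hcoord ⟨j, hj⟩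
    rw [Real.sin_sub]
    linear_combination (Real.sin φ) * e0 - (Real.cos φ) * e1
  have hr' : ∀ j, j < n → 0 ≤ r j := by
    intro j hj; simp only [hrdef, dif_pos hj]; exact Real.sqrt_nonneg _
  have hΘlb : ∀ j, j < n → 0 ≤ Θ j := by
    intro j hj; simp only [hΘdef, dif_pos hj]; exact (hθmem _).1
  have hΘub : ∀ j, j < n → Θ j < 2 * π := by
    intro j hj; simp only [hΘdef, dif_pos hj]; exact (hθmem _).2
  have hΘm : ∀ j k, j ≤ k → k < n → Θ j ≤ Θ k := by
    intro j k hjk hk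
    have hj : j < n := lt_of_le_of_lt hjk hk
    simp only [hΘdef, dif_pos hj, dif_pos hk]
    exact hmono (by exact Fin.mk_le_mk.mpr hjk)
  have hφ0 : 0 ≤ φ := by
    rw [hφdef]; split <;> exact (hθmem _).1
  have hφ2 : φ < 2 * π := by
    rw [hφdef]; split <;> exact (hθmem _).2
  have hlow : ∀ j, j < m → Θ j ≤ φ := by
    intro j hj
    have hm0 : m ≠ 0 := by omega
    have hjn : j < n := by omega
    simp only [hφdef, dif_neg hm0, hΘdef, dif_pos hjn]
    exact hmono (by exact Fin.mk_le_mk.mpr (by omega))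
  have hhigh : ∀ j, m ≤ j → j < n → φ ≤ Θ j := by
    intro j hmj hjn
    simp only [hΘdef, dif_pos hjn, hφdef]
    split
    · exact hmono (by exact Fin.mk_le_mk.mpr (by omega))
    · exact hmono (by exact Fin.mk_le_mk.mpr (by omega))
  -- partial sums
  have hvsum : ∀ k : Fin (n + 1), ∀ c : Fin 2, v k c =
      ∑ j ∈ Finset.range (k : ℕ), (if hj : j < n then ((h ⟨j, hj⟩ c : ℝ)) else 0) := by
    intro k
    induction k using Fin.induction with
    | zero => intro c; simp [hv0]
    | succ p ih =>
      intro c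
      rw [hvi p]
      simp only [Pi.add_apply]
      rw [ih c]
      rw [show ((p.succ : Fin (n + 1)) : ℕ) = (p : ℕ) + 1 from rfl, Finset.sum_range_succ,
        Fin.coe_castSucc]
      simp [p.is_lt]
  have hfvk : ∀ k : Fin (n + 1), f (v k) = ∑ j ∈ Finset.range (k : ℕ), g j := by
    intro k
    simp only [hfdef, hvsum k 0, hvsum k 1, Finset.mul_sum, ← Finset.sum_sub_distrib]
    apply Finset.sum_congr rfl
    intro j _
    by_cases hjn : j < n <;> simp [hgdef, hjn]
  have hvlast : v (Fin.last n) = 0 := by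
    funext c
    rw [hvsum (Fin.last n) c]
    have hl : ((Fin.last n : Fin (n + 1)) : ℕ) = n := rfl
    rw [hl, ← Fin.sum_univ_eq_sum_range]
    have : ∀ j : Fin n, (if hj : (j : ℕ) < n then ((h ⟨(j : ℕ), hj⟩ c : ℝ)) else 0)
        = (h j c : ℝ) := by intro j; simp [j.is_lt]
    rw [Finset.sum_congr rfl fun j _ => this j]
    have hs : ∑ j : Fin n, h j c = 0 := by
      have := congrFun hsum c
      simpa using this
    rw [← Int.cast_sum] at *
    · push_cast [hs]; simp
  have htot : ∑ j ∈ Finset.range n, g j = 0 := by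
    have := hfvk (Fin.last n)
    rw [hvlast] at this
    simp only [hfdef, Pi.zero_apply, mul_zero, sub_zero] at this
    rw [show ((Fin.last n : Fin (n + 1)) : ℕ) = n from rfl] at this
    linarith [this]
  have hmax : ∀ k : Fin (n + 1), f (v k) ≤ f (v i) := by
    intro k
    rw [hfvk k, hfvk i]
    exact stmt8_key n m hmn φ hφ0 hφ2 g Θ r hg' hr' hΘlb hΘub hΘm hlow hhigh htot
      (k : ℕ) (Nat.lt_succ_iff.mp k.isLt)
  -- convex hull in halfspace
  have hflin : IsLinearMap ℝ f := by
    constructor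
    · intro x y; simp only [hfdef, Pi.add_apply]; ring
    · intro c x; simp only [hfdef, Pi.smul_apply, smul_eq_mul]; ring
  have hCsub : convexHull ℝ (Set.range v) ⊆ {x | f x ≤ f (v i)} := by
    apply convexHull_min
    · rintro x ⟨k, rfl⟩; exact hmax k
    · exact convex_halfSpace_le hflin _
  have hni : v i ∉ interior (convexHull ℝ (Set.range v)) := by
    intro hint
    rw [mem_interior_iff_mem_nhds, Metric.mem_nhds_iff] at hint
    obtain ⟨ε, hε, hball⟩ := hint
    set u : Fin 2 → ℝ := ![Real.sin φ, -Real.cos φ] with hudef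
    have hu : ‖u‖ ≤ 1 := by
      rw [pi_norm_le_iff_of_nonneg zero_le_one]
      intro c
      fin_cases c <;> simp [hudef, Real.norm_eq_abs]
      · exact Real.abs_sin_le_one φ
      · exact Real.abs_cos_le_one φ
    have hx : v i + (ε / 2) • u ∈ convexHull ℝ (Set.range v) := by
      apply hball
      rw [Metric.mem_ball, dist_eq_norm, add_sub_cancel_left, norm_smul, Real.norm_eq_abs,
        abs_of_pos (by linarith)]
      nlinarith
    have hle := hCsub hx
    simp only [Set.mem_setOf_eq, hfdef, Pi.add_apply, Pi.smul_apply, hudef, smul_eq_mul,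
      Matrix.cons_val_zero, Matrix.cons_val_one, Matrix.head_cons] at hle
    nlinarith [Real.sin_sq_add_cos_sq φ, hε]
  exact ⟨subset_closure (subset_convexHull ℝ _ ⟨i, rfl⟩), hni⟩
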